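/- Let R be a unital ring in which for each prime p there exists a central element a_p with p²·a_p = p·1. Define c_p = 1 - p·a_p. Then c_p is a central idempotent of R, and c_p·c_q = 0 for all distinct primes p and q. -/
import Mathlib


/-- If for each prime `p` there is a central `a p` with
`p² a p = p·1`, then each `c_p = 1 - p·a p` is a central idempotent, and
`c_p c_q = 0` for distinct primes `p ≠ q`. -/
theorem stmt9 {R : Type*} [Ring R] (a : ℕ → R)
    (hcen : ∀ p : ℕ, p.Prime → a p ∈ Set.center R)
    (heq : ∀ p : ℕ, p.Prime → (p : R) ^ 2 * a p = (p : R)) :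
    (∀ p : ℕ, p.Prime →
      (1 - (p : R) * a p) ∈ Set.center R ∧
      (1 - (p : R) * a p) * (1 - (p : R) * a p) = 1 - (p : R) * a p) ∧
    (∀ p q : ℕ, p.Prime → q.Prime → p ≠ q →
      (1 - (p : R) * a p) * (1 - (q : R) * a q) = 0) := by
  have key : ∀ p : ℕ, p.Prime → (p : R) * (1 - (p : R) * a p) = 0 := by
    intro p hp
    rw [mul_sub, mul_one, ← mul_assoc, ← sq, heq p hp, sub_self]
  constructor
  · intro p hp
    constructor
    · have : (1 - (p : R) * a p) ∈ Subring.center R := by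
        exact sub_mem (one_mem _) (mul_mem (natCast_mem _ p) (hcen p hp))
      exact this
    · have hc : ∀ x : R, a p * x = x * a p := fun x =>
        (Subsemigroup.mem_center_iff.mp (hcen p hp) x).symm
      have h2 : (p : R) * a p * ((p : R) * a p) = (p : R) * a p := by
        rw [mul_assoc, hc, ← mul_assoc, ← mul_assoc, ← sq, heq p hp]
      rw [sub_mul, one_mul, mul_sub, mul_one, h2, sub_self, sub_zero]
  · intro p q hp hq hne
    set c := (1 - (p : R) * a p) * (1 - (q : R) * a q) with hc
    have hp0 : (p : R) * c = 0 := by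
      rw [hc, ← mul_assoc, key p hp, zero_mul]
    have hq0 : (q : R) * c = 0 := by
      rw [hc, ← mul_assoc, (Nat.cast_commute q (1 - (p : R) * a p)).eq,
        mul_assoc, key q hq, mul_zero]
    obtain ⟨u, v, huv⟩ : IsCoprime (p : ℤ) (q : ℤ) := by
      rw [Int.isCoprime_iff_gcd_eq_one]
      exact (Nat.coprime_primes hp hq).mpr hne
    have : ((u * p + v * q : ℤ) : R) * c = c := by rw [huv]; push_cast; simp
    rw [← this]
    push_cast
    rw [add_mul, mul_assoc, mul_assoc, hp0, hq0, mul_zero, mul_zero, add_zero]
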